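/- For every bounded measurable function θ of X, the oracle DMLIV loss decomposes as L¹(θ; q0, h0, p0) = L¹(θ0; q0, h0, p0) + E[V0(X)·(θ(X) − θ0(X))²]. In particular θ0 minimizes θ ↦ L¹(θ; q0, h0, p0) over all bounded measurable functions of X. -/

import Mathlib

open MeasureTheory

private theorem bdd_mul' {α : Type*} {f g : α → ℝ} (hf : ∃ C, ∀ x, |f x| ≤ C)
    (hg : ∃ C, ∀ x, |g x| ≤ C) : ∃ C, ∀ x, |f x * g x| ≤ C := by
  obtain ⟨C, hC⟩ := hf; obtain ⟨D, hD⟩ := hg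
  refine ⟨max C 0 * max D 0, fun x => ?_⟩
  rw [abs_mul]
  exact mul_le_mul ((hC x).trans (le_max_left _ _)) ((hD x).trans (le_max_left _ _))
    (abs_nonneg _) (le_max_right _ _)

private theorem bdd_sub' {α : Type*} {f g : α → ℝ} (hf : ∃ C, ∀ x, |f x| ≤ C)
    (hg : ∃ C, ∀ x, |g x| ≤ C) : ∃ C, ∀ x, |f x - g x| ≤ C := by
  obtain ⟨C, hC⟩ := hf; obtain ⟨D, hD⟩ := hg
  exact ⟨C + D, fun x => (abs_sub (f x) (g x)).trans (add_le_add (hC x) (hD x))⟩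

private theorem bdd_add' {α : Type*} {f g : α → ℝ} (hf : ∃ C, ∀ x, |f x| ≤ C)
    (hg : ∃ C, ∀ x, |g x| ≤ C) : ∃ C, ∀ x, |f x + g x| ≤ C := by
  obtain ⟨C, hC⟩ := hf; obtain ⟨D, hD⟩ := hg
  exact ⟨C + D, fun x => (abs_add_le (f x) (g x)).trans (add_le_add (hC x) (hD x))⟩

private abbrev mZX {Ω 𝓧 : Type*} [MeasurableSpace 𝓧] (Z : Ω → ℝ) (X : Ω → 𝓧) :
    MeasurableSpace Ω := MeasurableSpace.comap (fun ω => (Z ω, X ω)) inferInstance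

private abbrev mXc {Ω 𝓧 : Type*} [MeasurableSpace 𝓧] (X : Ω → 𝓧) : MeasurableSpace Ω :=
  MeasurableSpace.comap X inferInstance

theorem stmt_2
    {Ω 𝓧 : Type*} [MeasurableSpace Ω] [MeasurableSpace 𝓧] [StandardBorelSpace 𝓧]
    (μ : Measure Ω) [IsProbabilityMeasure μ]
    (Y T Z : Ω → ℝ) (X : Ω → 𝓧)
    (hY : Measurable Y) (hT : Measurable T) (hZ : Measurable Z) (hX : Measurable X)
    (hYbdd : ∃ C, ∀ ω, |Y ω| ≤ C) (hTbdd : ∃ C, ∀ ω, |T ω| ≤ C)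
    (hZbdd : ∃ C, ∀ ω, |Z ω| ≤ C)
    (θ0 f0 : 𝓧 → ℝ) (hθ0m : Measurable θ0) (hf0m : Measurable f0)
    (hθ0bdd : ∃ C, ∀ x, |θ0 x| ≤ C) (hf0bdd : ∃ C, ∀ x, |f0 x| ≤ C)
    (hIV : μ[fun ω => Y ω - θ0 (X ω) * T ω - f0 (X ω) |
        MeasurableSpace.comap (fun ω => (Z ω, X ω)) inferInstance] =ᵐ[μ] 0)
    (q0 p0 r0 : 𝓧 → ℝ) (hq0m : Measurable q0) (hp0m : Measurable p0) (hr0m : Measurable r0)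
    (hq0bdd : ∃ C, ∀ x, |q0 x| ≤ C) (hp0bdd : ∃ C, ∀ x, |p0 x| ≤ C)
    (hr0bdd : ∃ C, ∀ x, |r0 x| ≤ C)
    (hq0 : (fun ω => q0 (X ω)) =ᵐ[μ] μ[Y | MeasurableSpace.comap X inferInstance])
    (hp0 : (fun ω => p0 (X ω)) =ᵐ[μ] μ[T | MeasurableSpace.comap X inferInstance])
    (hr0 : (fun ω => r0 (X ω)) =ᵐ[μ] μ[Z | MeasurableSpace.comap X inferInstance])
    (h0 : ℝ × 𝓧 → ℝ) (hh0m : Measurable h0) (hh0bdd : ∃ C, ∀ zx, |h0 zx| ≤ C)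
    (hh0 : (fun ω => h0 (Z ω, X ω)) =ᵐ[μ]
        μ[T | MeasurableSpace.comap (fun ω => (Z ω, X ω)) inferInstance])
    (β0 : 𝓧 → ℝ) (hβ0m : Measurable β0) (hβ0bdd : ∃ C, ∀ x, |β0 x| ≤ C)
    (hβ0 : (fun ω => β0 (X ω)) =ᵐ[μ]
        μ[fun ω => (T ω - p0 (X ω)) * (Z ω - r0 (X ω)) | MeasurableSpace.comap X inferInstance])
    (V0 : 𝓧 → ℝ) (hV0m : Measurable V0) (hV0bdd : ∃ C, ∀ x, |V0 x| ≤ C)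
    (hV0 : (fun ω => V0 (X ω)) =ᵐ[μ]
        μ[fun ω => (h0 (Z ω, X ω) - p0 (X ω)) ^ 2 | MeasurableSpace.comap X inferInstance]) :
    ∀ θ : 𝓧 → ℝ, Measurable θ → (∃ C, ∀ x, |θ x| ≤ C) →
      ((∫ ω, (Y ω - q0 (X ω) - θ (X ω) * (h0 (Z ω, X ω) - p0 (X ω))) ^ 2 ∂μ)
          = (∫ ω, (Y ω - q0 (X ω) - θ0 (X ω) * (h0 (Z ω, X ω) - p0 (X ω))) ^ 2 ∂μ)
            + ∫ ω, V0 (X ω) * (θ (X ω) - θ0 (X ω)) ^ 2 ∂μ)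
      ∧ (∫ ω, (Y ω - q0 (X ω) - θ0 (X ω) * (h0 (Z ω, X ω) - p0 (X ω))) ^ 2 ∂μ)
          ≤ ∫ ω, (Y ω - q0 (X ω) - θ (X ω) * (h0 (Z ω, X ω) - p0 (X ω))) ^ 2 ∂μ := by
  intro θ hθm hθbdd
  have hm₁ : mZX Z X ≤ ‹MeasurableSpace Ω› := (hZ.prodMk hX).comap_le
  have hm₂ : mXc X ≤ ‹MeasurableSpace Ω› := hX.comap_le
  have hm₂₁ : mXc X ≤ mZX Z X := by
    have h1 : mXc X = MeasurableSpace.comap (fun ω => (Z ω, X ω))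
        (MeasurableSpace.comap Prod.snd inferInstance) := by
      rw [MeasurableSpace.comap_comp]; rfl
    rw [h1]
    exact MeasurableSpace.comap_mono measurable_snd.comap_le
  have hIV' : μ[fun ω => Y ω - θ0 (X ω) * T ω - f0 (X ω) | mZX Z X] =ᵐ[μ] 0 := hIV
  have hp0' : (fun ω => p0 (X ω)) =ᵐ[μ] μ[T | mXc X] := hp0
  have hh0' : (fun ω => h0 (Z ω, X ω)) =ᵐ[μ] μ[T | mZX Z X] := hh0
  have hV0' : (fun ω => V0 (X ω)) =ᵐ[μ]
      μ[fun ω => (h0 (Z ω, X ω) - p0 (X ω)) ^ 2 | mXc X] := hV0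
  haveI : SigmaFinite (μ.trim hm₁) := by infer_instance
  haveI : SigmaFinite (μ.trim hm₂) := by infer_instance
  -- measurability w.r.t. sub-σ-algebras
  have hXm₂ : Measurable[mXc X] X := Measurable.of_comap_le le_rfl
  have hZXm₁ : Measurable[mZX Z X] (fun ω => (Z ω, X ω)) := Measurable.of_comap_le le_rfl
  have sm2 : ∀ {g : 𝓧 → ℝ}, Measurable g → StronglyMeasurable[mXc X] (fun ω => g (X ω)) :=
    fun hg => (hg.comp hXm₂).stronglyMeasurable
  -- integrability helper
  have integ : ∀ {f : Ω → ℝ}, Measurable f → (∃ C, ∀ ω, |f ω| ≤ C) → Integrable f μ := by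
    rintro f hf ⟨C, hC⟩
    exact ⟨hf.aestronglyMeasurable,
      HasFiniteIntegral.of_bounded (C := C) (ae_of_all _ fun ω => by
        simpa [Real.norm_eq_abs] using hC ω)⟩
  -- abbreviations
  set W : Ω → ℝ := fun ω => h0 (Z ω, X ω) - p0 (X ω) with hWdef
  set R : Ω → ℝ := fun ω => Y ω - q0 (X ω) - θ0 (X ω) * W ω with hRdef
  set D : Ω → ℝ := fun ω => θ (X ω) - θ0 (X ω) with hDdef
  set G : Ω → ℝ := fun ω => f0 (X ω) - q0 (X ω) + θ0 (X ω) * p0 (X ω) with hGdef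
  have hθ0X : Measurable (fun ω => θ0 (X ω)) := hθ0m.comp hX
  have hθX : Measurable (fun ω => θ (X ω)) := hθm.comp hX
  have hq0X : Measurable (fun ω => q0 (X ω)) := hq0m.comp hX
  have hp0X : Measurable (fun ω => p0 (X ω)) := hp0m.comp hX
  have hf0X : Measurable (fun ω => f0 (X ω)) := hf0m.comp hX
  have hV0X : Measurable (fun ω => V0 (X ω)) := hV0m.comp hX
  have hh0X : Measurable (fun ω => h0 (Z ω, X ω)) := hh0m.comp (hZ.prodMk hX)
  have bθ0X : ∃ C, ∀ ω, |θ0 (X ω)| ≤ C := hθ0bdd.imp fun C hC ω => hC _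
  have bθX : ∃ C, ∀ ω, |θ (X ω)| ≤ C := hθbdd.imp fun C hC ω => hC _
  have bq0X : ∃ C, ∀ ω, |q0 (X ω)| ≤ C := hq0bdd.imp fun C hC ω => hC _
  have bp0X : ∃ C, ∀ ω, |p0 (X ω)| ≤ C := hp0bdd.imp fun C hC ω => hC _
  have bf0X : ∃ C, ∀ ω, |f0 (X ω)| ≤ C := hf0bdd.imp fun C hC ω => hC _
  have bV0X : ∃ C, ∀ ω, |V0 (X ω)| ≤ C := hV0bdd.imp fun C hC ω => hC _
  have bh0X : ∃ C, ∀ ω, |h0 (Z ω, X ω)| ≤ C := hh0bdd.imp fun C hC ω => hC _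
  have hWm : Measurable W := hh0X.sub hp0X
  have bW : ∃ C, ∀ ω, |W ω| ≤ C := bdd_sub' bh0X bp0X
  have hRm : Measurable R := (hY.sub hq0X).sub (hθ0X.mul hWm)
  have bR : ∃ C, ∀ ω, |R ω| ≤ C := bdd_sub' (bdd_sub' hYbdd bq0X) (bdd_mul' bθ0X bW)
  have hDm : Measurable D := hθX.sub hθ0X
  have bD : ∃ C, ∀ ω, |D ω| ≤ C := bdd_sub' bθX bθ0X
  have hGm : Measurable G := (hf0X.sub hq0X).add (hθ0X.mul hp0X)
  have bG : ∃ C, ∀ ω, |G ω| ≤ C := bdd_add' (bdd_sub' bf0X bq0X) (bdd_mul' bθ0X bp0X)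
  -- Key 1 : E[W | X] = 0
  have key1 : μ[W|mXc X] =ᵐ[μ] 0 := by
    have h1 : μ[W|mXc X] =ᵐ[μ] μ[(fun ω => h0 (Z ω, X ω))|mXc X] - μ[(fun ω => p0 (X ω))|mXc X] :=
      condExp_sub (integ hh0X bh0X) (integ hp0X bp0X) _
    have h2 : μ[(fun ω => h0 (Z ω, X ω))|mXc X] =ᵐ[μ] μ[T|mXc X] :=
      (condExp_congr_ae hh0').trans (condExp_condExp_of_le hm₂₁ hm₁)
    have h3 : μ[(fun ω => p0 (X ω))|mXc X] = fun ω => p0 (X ω) :=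
      condExp_of_stronglyMeasurable hm₂ (sm2 hp0m) (integ hp0X bp0X)
    filter_upwards [h1, h2, hp0'] with ω e1 e2 e3
    simp only [Pi.sub_apply, Pi.zero_apply] at e1 ⊢
    have := congrFun h3 ω
    linarith [this]
  -- Key 2 : E[R | Z, X] = G
  have key2 : μ[R|mZX Z X] =ᵐ[μ] G := by
    set U : Ω → ℝ := fun ω => Y ω - θ0 (X ω) * T ω - f0 (X ω) with hUdef
    set Vv : Ω → ℝ := fun ω => θ0 (X ω) * (T ω - h0 (Z ω, X ω) + p0 (X ω)) with hVvdef
    set c : Ω → ℝ := fun ω => f0 (X ω) - q0 (X ω) with hcdef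
    have hUm : Measurable U := (hY.sub (hθ0X.mul hT)).sub hf0X
    have bU : ∃ C, ∀ ω, |U ω| ≤ C := bdd_sub' (bdd_sub' hYbdd (bdd_mul' bθ0X hTbdd)) bf0X
    have hgm : Measurable (fun ω => T ω - h0 (Z ω, X ω) + p0 (X ω)) := (hT.sub hh0X).add hp0X
    have bg : ∃ C, ∀ ω, |T ω - h0 (Z ω, X ω) + p0 (X ω)| ≤ C :=
      bdd_add' (bdd_sub' hTbdd bh0X) bp0X
    have hVvm : Measurable Vv := hθ0X.mul hgm
    have bVv : ∃ C, ∀ ω, |Vv ω| ≤ C := bdd_mul' bθ0X bg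
    have hcm : Measurable c := hf0X.sub hq0X
    have bc : ∃ C, ∀ ω, |c ω| ≤ C := bdd_sub' bf0X bq0X
    have hReq : R = fun ω => U ω + (Vv ω + c ω) := by
      funext ω; simp only [hRdef, hUdef, hVvdef, hcdef, hWdef]; ring
    have e0 : μ[R|mZX Z X] =ᵐ[μ] μ[U|mZX Z X] + μ[(fun ω => Vv ω + c ω)|mZX Z X] := by
      rw [hReq]
      exact condExp_add (integ hUm bU) ((integ hVvm bVv).add (integ hcm bc)) _
    have e1 : μ[(fun ω => Vv ω + c ω)|mZX Z X] =ᵐ[μ] μ[Vv|mZX Z X] + μ[c|mZX Z X] :=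
      condExp_add (integ hVvm bVv) (integ hcm bc) _
    have e2 : μ[c|mZX Z X] = c :=
      condExp_of_stronglyMeasurable hm₁ (((sm2 hf0m).sub (sm2 hq0m)).mono hm₂₁)
        (integ hcm bc)
    -- E[Vv|mZX Z X] = θ0(X) * E[T - h0 + p0 | mZX Z X]
    have e3 : μ[Vv|mZX Z X] =ᵐ[μ]
        (fun ω => θ0 (X ω)) * μ[(fun ω => T ω - h0 (Z ω, X ω) + p0 (X ω))|mZX Z X] :=
      condExp_mul_of_stronglyMeasurable_left ((sm2 hθ0m).mono hm₂₁) (integ hVvm bVv)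
        (integ hgm bg)
    have e4 : μ[(fun ω => T ω - h0 (Z ω, X ω) + p0 (X ω))|mZX Z X] =ᵐ[μ]
        μ[(fun ω => T ω - h0 (Z ω, X ω))|mZX Z X] + μ[(fun ω => p0 (X ω))|mZX Z X] :=
      condExp_add ((integ hT hTbdd).sub (integ hh0X bh0X)) (integ hp0X bp0X) _
    have e5 : μ[(fun ω => T ω - h0 (Z ω, X ω))|mZX Z X] =ᵐ[μ]
        μ[T|mZX Z X] - μ[(fun ω => h0 (Z ω, X ω))|mZX Z X] :=
      condExp_sub (integ hT hTbdd) (integ hh0X bh0X) _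
    have e6 : μ[(fun ω => h0 (Z ω, X ω))|mZX Z X] = fun ω => h0 (Z ω, X ω) :=
      condExp_of_stronglyMeasurable hm₁ ((hh0m.comp hZXm₁).stronglyMeasurable)
        (integ hh0X bh0X)
    have e7 : μ[(fun ω => p0 (X ω))|mZX Z X] = fun ω => p0 (X ω) :=
      condExp_of_stronglyMeasurable hm₁ ((sm2 hp0m).mono hm₂₁) (integ hp0X bp0X)
    filter_upwards [e0, e1, e3, e4, e5, hh0', hIV'] with ω f0' f1 f3 f4 f5 f6 f7
    simp only [Pi.add_apply, Pi.sub_apply, Pi.mul_apply, Pi.zero_apply] at *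
    rw [f0', f1, f3, f4, f5, congrFun e6 ω, congrFun e7 ω, congrFun e2 ω, f7, ← f6]
    have hc' : c ω = f0 (X ω) - q0 (X ω) := rfl
    have hG' : G ω = f0 (X ω) - q0 (X ω) + θ0 (X ω) * p0 (X ω) := rfl
    rw [hc', hG']; ring
  -- Key 3 : cross term vanishes
  have smW1 : StronglyMeasurable[mZX Z X] W :=
    (hh0m.comp hZXm₁).stronglyMeasurable.sub ((sm2 hp0m).mono hm₂₁)
  have smD2 : StronglyMeasurable[mXc X] D := (sm2 hθm).sub (sm2 hθ0m)
  have hDW : Measurable (fun ω => D ω * W ω) := hDm.mul hWm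
  have bDW : ∃ C, ∀ ω, |D ω * W ω| ≤ C := bdd_mul' bD bW
  have key3 : ∫ ω, R ω * (D ω * W ω) ∂μ = 0 := by
    have i1 : ∫ ω, R ω * (D ω * W ω) ∂μ = ∫ ω, ((fun ω => D ω * W ω) * R) ω ∂μ := by
      apply integral_congr_ae; filter_upwards with ω; simp [Pi.mul_apply]; ring
    have p1 : μ[(fun ω => D ω * W ω) * R|mZX Z X] =ᵐ[μ] (fun ω => D ω * W ω) * μ[R|mZX Z X] :=
      condExp_mul_of_stronglyMeasurable_left ((smD2.mono hm₂₁).mul smW1)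
        (integ (hDW.mul hRm) (bdd_mul' bDW bR)) (integ hRm bR)
    have i2 : ∫ ω, ((fun ω => D ω * W ω) * R) ω ∂μ
        = ∫ ω, ((fun ω => D ω * G ω) * W) ω ∂μ := by
      rw [← integral_condExp hm₁ (f := (fun ω => D ω * W ω) * R)]
      refine integral_congr_ae ?_
      filter_upwards [p1, key2] with ω g1 g2
      simp only [Pi.mul_apply] at *
      rw [g1, g2]; ring
    have p2 : μ[(fun ω => D ω * G ω) * W|mXc X] =ᵐ[μ] (fun ω => D ω * G ω) * μ[W|mXc X] :=
      condExp_mul_of_stronglyMeasurable_left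
        (smD2.mul (((sm2 hf0m).sub (sm2 hq0m)).add ((sm2 hθ0m).mul (sm2 hp0m))))
        (integ ((hDm.mul hGm).mul hWm) (bdd_mul' (bdd_mul' bD bG) bW))
        (integ hWm bW)
    have i3 : ∫ ω, ((fun ω => D ω * G ω) * W) ω ∂μ = 0 := by
      rw [← integral_condExp hm₂ (f := (fun ω => D ω * G ω) * W)]
      have : μ[(fun ω => D ω * G ω) * W|mXc X] =ᵐ[μ] 0 := by
        filter_upwards [p2, key1] with ω g1 g2
        simp only [Pi.mul_apply, Pi.zero_apply] at *
        rw [g1, g2, mul_zero]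
      rw [integral_congr_ae this]; simp
    rw [i1, i2, i3]
  -- Key 4 : square term
  have key4 : ∫ ω, D ω ^ 2 * W ω ^ 2 ∂μ = ∫ ω, V0 (X ω) * D ω ^ 2 ∂μ := by
    have p3 : μ[(fun ω => D ω ^ 2) * (fun ω => W ω ^ 2)|mXc X]
        =ᵐ[μ] (fun ω => D ω ^ 2) * μ[(fun ω => W ω ^ 2)|mXc X] :=
      condExp_mul_of_stronglyMeasurable_left ((smD2.measurable.pow_const 2).stronglyMeasurable)
        (integ ((hDm.pow_const 2).mul (hWm.pow_const 2))
          (bdd_mul' (bdd_mul' bD bD |>.imp fun C hC ω => by simpa [sq] using hC ω)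
            (bdd_mul' bW bW |>.imp fun C hC ω => by simpa [sq] using hC ω)))
        (integ (hWm.pow_const 2) (bdd_mul' bW bW |>.imp fun C hC ω => by simpa [sq] using hC ω))
    calc ∫ ω, D ω ^ 2 * W ω ^ 2 ∂μ
        = ∫ ω, ((fun ω => D ω ^ 2) * (fun ω => W ω ^ 2)) ω ∂μ := by
          exact integral_congr_ae (ae_of_all _ fun ω => by simp [Pi.mul_apply])
      _ = ∫ ω, (μ[(fun ω => D ω ^ 2) * (fun ω => W ω ^ 2)|mXc X]) ω ∂μ :=
          (integral_condExp hm₂).symm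
      _ = ∫ ω, V0 (X ω) * D ω ^ 2 ∂μ := by
          refine integral_congr_ae ?_
          filter_upwards [p3, hV0'] with ω g1 g2
          simp only [Pi.mul_apply] at *
          rw [g1, ← g2]; ring
  -- integrability of the pieces
  have bR2 : ∃ C, ∀ ω, |R ω ^ 2| ≤ C := bdd_mul' bR bR |>.imp fun C hC ω => by
    simpa [sq] using hC ω
  have iR2 : Integrable (fun ω => R ω ^ 2) μ := integ (hRm.pow_const 2) bR2
  have iCross : Integrable (fun ω => R ω * (D ω * W ω)) μ :=
    integ (hRm.mul hDW) (bdd_mul' bR bDW)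
  have iD2W2 : Integrable (fun ω => D ω ^ 2 * W ω ^ 2) μ :=
    integ ((hDm.pow_const 2).mul (hWm.pow_const 2))
      (bdd_mul' (bdd_mul' bD bD |>.imp fun C hC ω => by simpa [sq] using hC ω)
        (bdd_mul' bW bW |>.imp fun C hC ω => by simpa [sq] using hC ω))
  -- main decomposition
  have main : (∫ ω, (Y ω - q0 (X ω) - θ (X ω) * (h0 (Z ω, X ω) - p0 (X ω))) ^ 2 ∂μ)
      = (∫ ω, R ω ^ 2 ∂μ) + ∫ ω, V0 (X ω) * D ω ^ 2 ∂μ := by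
    have expand : (fun ω => (Y ω - q0 (X ω) - θ (X ω) * (h0 (Z ω, X ω) - p0 (X ω))) ^ 2)
        = fun ω => R ω ^ 2 + (D ω ^ 2 * W ω ^ 2 - 2 * (R ω * (D ω * W ω))) := by
      funext ω; simp only [hRdef, hDdef, hWdef]; ring
    have hsplit : ∫ ω, (R ω ^ 2 + (D ω ^ 2 * W ω ^ 2 - 2 * (R ω * (D ω * W ω)))) ∂μ
        = (∫ ω, R ω ^ 2 ∂μ) + ∫ ω, (D ω ^ 2 * W ω ^ 2 - 2 * (R ω * (D ω * W ω))) ∂μ :=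
      integral_add iR2 (iD2W2.sub (iCross.const_mul 2))
    have hsplit2 : ∫ ω, (D ω ^ 2 * W ω ^ 2 - 2 * (R ω * (D ω * W ω))) ∂μ
        = (∫ ω, D ω ^ 2 * W ω ^ 2 ∂μ) - ∫ ω, 2 * (R ω * (D ω * W ω)) ∂μ :=
      integral_sub iD2W2 (iCross.const_mul 2)
    have h2c : ∫ ω, 2 * (R ω * (D ω * W ω)) ∂μ = 2 * ∫ ω, R ω * (D ω * W ω) ∂μ :=
      integral_const_mul 2 _
    rw [expand, hsplit, hsplit2, h2c, key3, key4]
    ring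
  have hfirst : (∫ ω, (Y ω - q0 (X ω) - θ0 (X ω) * (h0 (Z ω, X ω) - p0 (X ω))) ^ 2 ∂μ)
      = ∫ ω, R ω ^ 2 ∂μ := by
    refine integral_congr_ae (ae_of_all _ fun ω => ?_)
    simp only [hRdef, hWdef]
  have hsecond : (∫ ω, V0 (X ω) * (θ (X ω) - θ0 (X ω)) ^ 2 ∂μ)
      = ∫ ω, V0 (X ω) * D ω ^ 2 ∂μ := rfl
  have hnn : 0 ≤ ∫ ω, V0 (X ω) * D ω ^ 2 ∂μ := by
    have hV0nn : ∀ᵐ ω ∂μ, 0 ≤ V0 (X ω) := by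
      filter_upwards [hV0', condExp_nonneg (m := (mXc X)) (μ := μ)
        (f := fun ω => (h0 (Z ω, X ω) - p0 (X ω)) ^ 2)
        (ae_of_all _ fun ω => sq_nonneg _)] with ω g1 g2
      rw [g1]; exact g2
    refine integral_nonneg_of_ae ?_
    filter_upwards [hV0nn] with ω g
    exact mul_nonneg g (sq_nonneg _)
  constructor
  · rw [main, hfirst, hsecond]
  · rw [main, hfirst]
    linarith
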